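/- Let r > 0 and n ≥ 1. Let X_1,…,X_n and Y_1,…,Y_n be nonempty compact metric spaces each of diameter at most r, let Z be a compact (r,n)-stacked space over X_1,…,X_n and W a compact (r,n)-stacked space over Y_1,…,Y_n. Then d_GH(Z, W) ≤ max_{1≤k≤n} d_GH(X_k, Y_k). -/

import Mathlib

open GromovHausdorff Metric Set

universe u v w

def IsStackedSpace (r : ℝ) {n : ℕ} (X : Fin n → Type u) [∀ k, MetricSpace (X k)]
    (Z : Type v) [MetricSpace Z] (p : Bool → Z) (P : Fin n → Set Z) : Prop :=
  dist (p true) (p false) = 3 * r ∧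
  (Pairwise fun k l : Fin n => Disjoint (P k) (P l)) ∧
  (∀ (k : Fin n) (s : Bool), p s ∉ P k) ∧
  ({p true, p false} ∪ ⋃ k, P k) = Set.univ ∧
  (∀ k : Fin n, Nonempty (X k ≃ᵢ (P k : Set Z))) ∧
  (∀ (k : Fin n) (s : Bool), ∀ z ∈ P k, dist (p s) z = 5 * r * ((k : ℕ) + 1)) ∧
  (∀ k l : Fin n, k ≠ l → ∀ z ∈ P k, ∀ w ∈ P l,
    dist z w = 5 * r * |((k : ℕ) : ℝ) - ((l : ℕ) : ℝ)|)



section AuxArith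

lemma mul5_le_mul5 {r a b : ℝ} (hr : 0 ≤ r) (h : a ≤ b) : 5 * r * a ≤ 5 * r * b :=
  mul_le_mul_of_nonneg_left h (by linarith)

lemma one_le_abs_natCast {a b : ℕ} (h : a ≠ b) : 1 ≤ |(a : ℝ) - (b : ℝ)| := by
  rcases h.lt_or_gt with h' | h'
  · have : (a : ℝ) + 1 ≤ (b : ℝ) := by exact_mod_cast Nat.succ_le_of_lt h'
    rw [abs_sub_comm, abs_of_nonneg (by linarith)]; linarith
  · have : (b : ℝ) + 1 ≤ (a : ℝ) := by exact_mod_cast Nat.succ_le_of_lt h'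
    rw [abs_of_nonneg (by linarith)]; linarith

end AuxArith

section Coupling
variable {A : Type*} {B : Type*} [MetricSpace A] [CompactSpace A] [Nonempty A]
  [MetricSpace B] [CompactSpace B] [Nonempty B]

lemma coupling_surj (c : OptimalGHCoupling A B) :
    (∃ x, optimalGHInjl A B x = c) ∨ ∃ y, optimalGHInjr A B y = c := by
  obtain ⟨z, rfl⟩ : ∃ z : A ⊕ B, Quotient.mk'' z = c := Quotient.exists_rep c
  rcases z with x | y
  · exact Or.inl ⟨x, rfl⟩
  · exact Or.inr ⟨y, rfl⟩

lemma coupling_edist_ne_top :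
    EMetric.hausdorffEdist (range (optimalGHInjl A B)) (range (optimalGHInjr A B)) ≠ ⊤ :=
  hausdorffEdist_ne_top_of_nonempty_of_bounded (range_nonempty _) (range_nonempty _)
    (isCompact_range (isometry_optimalGHInjl A B).continuous).isBounded
    (isCompact_range (isometry_optimalGHInjr A B).continuous).isBounded

lemma exists_close_injr (x : A) :
    ∃ y : B, dist (optimalGHInjl A B x) (optimalGHInjr A B y) ≤ ghDist A B := by
  have h1 : infDist (optimalGHInjl A B x) (range (optimalGHInjr A B)) ≤ ghDist A B := by
    rw [← hausdorffDist_optimal (X := A) (Y := B)]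
    exact infDist_le_hausdorffDist_of_mem (mem_range_self _) coupling_edist_ne_top
  obtain ⟨y, hy, hd⟩ := (isCompact_range (isometry_optimalGHInjr A B).continuous)
    |>.exists_infDist_eq_dist (range_nonempty _) (optimalGHInjl A B x)
  obtain ⟨b, rfl⟩ := hy
  exact ⟨b, by rwa [← hd]⟩

lemma exists_close_injl (y : B) :
    ∃ x : A, dist (optimalGHInjr A B y) (optimalGHInjl A B x) ≤ ghDist A B := by
  have h1 : infDist (optimalGHInjr A B y) (range (optimalGHInjl A B)) ≤ ghDist A B := by
    rw [← hausdorffDist_optimal (X := A) (Y := B), hausdorffDist_comm]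
    refine infDist_le_hausdorffDist_of_mem (mem_range_self _) ?_
    rw [EMetric.hausdorffEdist_comm]
    exact coupling_edist_ne_top
  obtain ⟨x, hx, hd⟩ := (isCompact_range (isometry_optimalGHInjl A B).continuous)
    |>.exists_infDist_eq_dist (range_nonempty _) (optimalGHInjr A B y)
  obtain ⟨a, rfl⟩ := hx
  exact ⟨a, by rwa [← hd]⟩
end Coupling

section GlueR
variable (A : Type*) (B : Type*) [MetricSpace A] [CompactSpace A] [Nonempty A]
    [MetricSpace B] [CompactSpace B] [Nonempty B] (r : ℝ)

/-- wrapper for `A ⊕ B` carrying the constant-`r` cross metric -/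
def GlueR := A ⊕ B

def toGlueL : A → GlueR A B := Sum.inl
def toGlueR : B → GlueR A B := Sum.inr

variable {A B}

def glueRDist : A ⊕ B → A ⊕ B → ℝ
  | .inl x, .inl x' => dist x x'
  | .inr y, .inr y' => dist y y'
  | _, _ => r

variable (hr : 0 < r) (hA : diam (univ : Set A) ≤ r) (hB : diam (univ : Set B) ≤ r)

include hr hA hB in
lemma ghDist_le_of_diam_le : ghDist A B ≤ r := by
  have hb : ∀ x x' : A, dist x x' ≤ r := fun x x' =>
    (dist_le_diam_of_mem (isBounded_of_compactSpace) (mem_univ _) (mem_univ _)).trans hA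
  have hb' : ∀ y y' : B, dist y y' ≤ r := fun y y' =>
    (dist_le_diam_of_mem (isBounded_of_compactSpace) (mem_univ _) (mem_univ _)).trans hB
  letI : MetricSpace (GlueR A B) :=
    { dist := glueRDist r
      dist_self := by rintro (x | y) <;> simp [glueRDist]
      dist_comm := by rintro (x | y) (x' | y') <;> simp [glueRDist, dist_comm]
      dist_triangle := by
        rintro (x | y) (x' | y') (x'' | y'') <;> simp only [glueRDist] <;>
          first
            | exact dist_triangle _ _ _
            | exact le_add_of_nonneg_left dist_nonneg
            | exact le_add_of_nonneg_right dist_nonneg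
            | exact (hb _ _).trans (by linarith)
            | exact (hb' _ _).trans (by linarith)
      eq_of_dist_eq_zero := by
        rintro (x | y) (x' | y') h <;> simp only [glueRDist] at h
        · exact congrArg Sum.inl (dist_eq_zero.1 h)
        · exact absurd h (ne_of_gt hr)
        · exact absurd h (ne_of_gt hr)
        · exact congrArg Sum.inr (dist_eq_zero.1 h) }
  have il : Isometry (toGlueL A B) := Isometry.of_dist_eq fun _ _ => rfl
  have ir : Isometry (toGlueR A B) := Isometry.of_dist_eq fun _ _ => rfl
  haveI : Nonempty (GlueR A B) := ⟨toGlueL A B (Classical.arbitrary A)⟩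
  refine (ghDist_le_hausdorffDist il ir).trans ?_
  apply hausdorffDist_le_of_mem_dist hr.le
  · rintro _ ⟨x, rfl⟩
    exact ⟨toGlueR A B (Classical.arbitrary B), mem_range_self _, le_of_eq rfl⟩
  · rintro _ ⟨y, rfl⟩
    exact ⟨toGlueL A B (Classical.arbitrary A), mem_range_self _, le_of_eq rfl⟩
end GlueR

section CouplingDiam
variable {A : Type*} {B : Type*} [MetricSpace A] [CompactSpace A] [Nonempty A]
  [MetricSpace B] [CompactSpace B] [Nonempty B] {r : ℝ}

lemma coupling_dist_le (hr : 0 < r) (hA : diam (univ : Set A) ≤ r)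
    (hB : diam (univ : Set B) ≤ r) (c c' : OptimalGHCoupling A B) : dist c c' ≤ 3 * r := by
  have hgh : ghDist A B ≤ r := ghDist_le_of_diam_le r hr hA hB
  have hbA : ∀ x x' : A, dist x x' ≤ r := fun x x' =>
    (dist_le_diam_of_mem (isBounded_of_compactSpace) (mem_univ _) (mem_univ _)).trans hA
  have hbB : ∀ y y' : B, dist y y' ≤ r := fun y y' =>
    (dist_le_diam_of_mem (isBounded_of_compactSpace) (mem_univ _) (mem_univ _)).trans hB
  have cross : ∀ (x : A) (y : B), dist (optimalGHInjl A B x) (optimalGHInjr A B y) ≤ 2 * r := by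
    intro x y
    obtain ⟨y0, hy0⟩ := exists_close_injr (B := B) x
    calc dist (optimalGHInjl A B x) (optimalGHInjr A B y)
        ≤ dist (optimalGHInjl A B x) (optimalGHInjr A B y0)
          + dist (optimalGHInjr A B y0) (optimalGHInjr A B y) := dist_triangle _ _ _
      _ ≤ ghDist A B + dist y0 y := by rw [(isometry_optimalGHInjr A B).dist_eq]; linarith
      _ ≤ 2 * r := by linarith [hbB y0 y]
  rcases coupling_surj c with ⟨x, rfl⟩ | ⟨y, rfl⟩ <;>
    rcases coupling_surj c' with ⟨x', rfl⟩ | ⟨y', rfl⟩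
  · rw [(isometry_optimalGHInjl A B).dist_eq]; linarith [hbA x x']
  · linarith [cross x y']
  · rw [dist_comm]; linarith [cross x' y]
  · rw [(isometry_optimalGHInjr A B).dist_eq]; linarith [hbB y y']
end CouplingDiam

section Tot
variable {n : ℕ} (r : ℝ) (X Y : Fin n → Type u)
  [∀ k, MetricSpace (X k)] [∀ k, CompactSpace (X k)] [∀ k, Nonempty (X k)]
  [∀ k, MetricSpace (Y k)] [∀ k, CompactSpace (Y k)] [∀ k, Nonempty (Y k)]

def TotSp := Bool ⊕ Σ k : Fin n, OptimalGHCoupling (X k) (Y k)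

noncomputable def totDist : TotSp X Y → TotSp X Y → ℝ
  | .inl s, .inl s' => if s = s' then 0 else 3 * r
  | .inl _, .inr ⟨k, _⟩ => 5 * r * ((k : ℕ) + 1)
  | .inr ⟨k, _⟩, .inl _ => 5 * r * ((k : ℕ) + 1)
  | .inr ⟨k, c⟩, .inr ⟨l, c'⟩ =>
      if h : k = l then @dist (OptimalGHCoupling (X l) (Y l)) _ (h ▸ c) c'
      else 5 * r * |((k : ℕ) : ℝ) - ((l : ℕ) : ℝ)|

lemma totDist_same (k : Fin n) (c c' : OptimalGHCoupling (X k) (Y k)) :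
    totDist r X Y (.inr ⟨k, c⟩) (.inr ⟨k, c'⟩) = dist c c' := by
  simp [totDist]

lemma totDist_diff {k l : Fin n} (h : k ≠ l) (c : OptimalGHCoupling (X k) (Y k))
    (c' : OptimalGHCoupling (X l) (Y l)) :
    totDist r X Y (.inr ⟨k, c⟩) (.inr ⟨l, c'⟩) = 5 * r * |((k : ℕ) : ℝ) - ((l : ℕ) : ℝ)| := by
  simp [totDist, h]

lemma totDist_inl_inl (s s' : Bool) :
    totDist r X Y (.inl s) (.inl s') = if s = s' then 0 else 3 * r := rfl

lemma totDist_inl_inr (s : Bool) (k : Fin n) (c : OptimalGHCoupling (X k) (Y k)) :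
    totDist r X Y (.inl s) (.inr ⟨k, c⟩) = 5 * r * ((k : ℕ) + 1) := rfl

lemma totDist_inr_inl (s : Bool) (k : Fin n) (c : OptimalGHCoupling (X k) (Y k)) :
    totDist r X Y (.inr ⟨k, c⟩) (.inl s) = 5 * r * ((k : ℕ) + 1) := rfl

variable {r}

lemma totDist_self : ∀ a : TotSp X Y, totDist r X Y a a = 0 := by
    rintro (s | ⟨k, c⟩)
    · simp [totDist_inl_inl]
    · rw [totDist_same]; exact dist_self c
lemma totDist_comm : ∀ a b : TotSp X Y, totDist r X Y a b = totDist r X Y b a := by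
    rintro (s | ⟨k, c⟩) (s' | ⟨l, c'⟩)
    · rw [totDist_inl_inl, totDist_inl_inl]
      by_cases h : s = s'
      · simp [h]
      · simp [h, Ne.symm h]
    · rw [totDist_inl_inr, totDist_inr_inl]
    · rw [totDist_inl_inr, totDist_inr_inl]
    · by_cases h : k = l
      · subst h; rw [totDist_same, totDist_same]; exact dist_comm c c'
      · rw [totDist_diff r X Y h, totDist_diff r X Y (Ne.symm h), abs_sub_comm]
lemma totDist_triangle (hr : 0 < r) (hdX : ∀ k, diam (univ : Set (X k)) ≤ r)
    (hdY : ∀ k, diam (univ : Set (Y k)) ≤ r) :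
    ∀ a b c : TotSp X Y, totDist r X Y a c ≤ totDist r X Y a b + totDist r X Y b c := by
    have h5r : (0 : ℝ) ≤ 5 * r := by linarith
    rintro (s | ⟨k, c⟩) (s' | ⟨l, c'⟩) (s'' | ⟨m, c''⟩)
    -- (inl, inl, inl)
    · cases s <;> cases s' <;> cases s'' <;> simp [totDist_inl_inl] <;> linarith
    -- (inl, inl, inr)
    · rw [totDist_inl_inr, totDist_inl_inl, totDist_inl_inr]
      split_ifs <;> linarith
    -- (inl, inr, inl)
    · rw [totDist_inl_inl, totDist_inl_inr, totDist_inr_inl]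
      have hl0 : (0 : ℝ) ≤ ((l : ℕ) : ℝ) := Nat.cast_nonneg _
      have : 5 * r * 1 ≤ 5 * r * (((l : ℕ) : ℝ) + 1) := mul5_le_mul5 hr.le (by linarith)
      split_ifs <;> linarith
    -- (inl, inr, inr)
    · rw [totDist_inl_inr, totDist_inl_inr]
      by_cases h : l = m
      · subst h
        rw [totDist_same]
        linarith [dist_nonneg (x := c') (y := c'')]
      · rw [totDist_diff r X Y h]
        have habs : ((m : ℕ) : ℝ) - ((l : ℕ) : ℝ) ≤ |((l : ℕ) : ℝ) - ((m : ℕ) : ℝ)| := by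
          rw [abs_sub_comm]; exact le_abs_self _
        have := mul5_le_mul5 (a := ((m : ℕ) : ℝ) + 1)
          (b := (((l : ℕ) : ℝ) + 1) + |((l : ℕ) : ℝ) - ((m : ℕ) : ℝ)|) hr.le (by linarith)
        linarith [this]
    -- (inr, inl, inl)
    · rw [totDist_inr_inl, totDist_inr_inl, totDist_inl_inl]
      split_ifs <;> linarith
    -- (inr, inl, inr)
    · rw [totDist_inr_inl, totDist_inl_inr]
      by_cases h : k = m
      · subst h
        rw [totDist_same]
        have hc := coupling_dist_le hr (hdX k) (hdY k) c c''
        have hk0 : (0 : ℝ) ≤ ((k : ℕ) : ℝ) := Nat.cast_nonneg _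
        have : 5 * r * 1 ≤ 5 * r * (((k : ℕ) : ℝ) + 1) := mul5_le_mul5 hr.le (by linarith)
        linarith
      · rw [totDist_diff r X Y h]
        have hk0 : (0 : ℝ) ≤ ((k : ℕ) : ℝ) := Nat.cast_nonneg _
        have hm0 : (0 : ℝ) ≤ ((m : ℕ) : ℝ) := Nat.cast_nonneg _
        have habs : |((k : ℕ) : ℝ) - ((m : ℕ) : ℝ)| ≤ (((k : ℕ) : ℝ) + 1) + (((m : ℕ) : ℝ) + 1) :=
          abs_le.2 ⟨by linarith, by linarith⟩
        have := mul5_le_mul5 hr.le habs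
        linarith
    -- (inr, inr, inl)
    · rw [totDist_inr_inl, totDist_inr_inl]
      by_cases h : k = l
      · subst h
        rw [totDist_same]
        linarith [dist_nonneg (x := c) (y := c')]
      · rw [totDist_diff r X Y h]
        have habs : ((k : ℕ) : ℝ) - ((l : ℕ) : ℝ) ≤ |((k : ℕ) : ℝ) - ((l : ℕ) : ℝ)| :=
          le_abs_self _
        have := mul5_le_mul5 (a := ((k : ℕ) : ℝ) + 1)
          (b := |((k : ℕ) : ℝ) - ((l : ℕ) : ℝ)| + (((l : ℕ) : ℝ) + 1)) hr.le (by linarith)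
        linarith
    -- (inr, inr, inr)
    · by_cases h1 : k = l
      · subst h1
        rw [totDist_same]
        by_cases h2 : k = m
        · subst h2
          rw [totDist_same, totDist_same]
          exact dist_triangle c c' c''
        · rw [totDist_diff r X Y h2, totDist_diff r X Y h2]
          linarith [dist_nonneg (x := c) (y := c')]
      · rw [totDist_diff r X Y h1]
        by_cases h2 : l = m
        · subst h2
          rw [totDist_diff r X Y h1, totDist_same]
          linarith [dist_nonneg (x := c') (y := c'')]
        · rw [totDist_diff r X Y h2]
          by_cases h3 : k = m
          · subst h3
            rw [totDist_same]
            have hc := coupling_dist_le hr (hdX k) (hdY k) c c''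
            have hkl : (1 : ℝ) ≤ |((k : ℕ) : ℝ) - ((l : ℕ) : ℝ)| :=
              one_le_abs_natCast fun hh => h1 (Fin.ext hh)
            have h1' : 5 * r * 1 ≤ 5 * r * |((k : ℕ) : ℝ) - ((l : ℕ) : ℝ)| :=
              mul5_le_mul5 hr.le hkl
            have hlk : (1 : ℝ) ≤ |((l : ℕ) : ℝ) - ((k : ℕ) : ℝ)| := by
              rwa [abs_sub_comm]
            have h2' : 5 * r * 1 ≤ 5 * r * |((l : ℕ) : ℝ) - ((k : ℕ) : ℝ)| :=
              mul5_le_mul5 hr.le hlk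
            linarith
          · rw [totDist_diff r X Y h3]
            have habs := abs_sub_le ((k : ℕ) : ℝ) ((l : ℕ) : ℝ) ((m : ℕ) : ℝ)
            have := mul5_le_mul5 hr.le habs
            linarith
lemma totDist_eq_zero (hr : 0 < r) :
    ∀ a b : TotSp X Y, totDist r X Y a b = 0 → a = b := by
    rintro (s | ⟨k, c⟩) (s' | ⟨l, c'⟩) h
    · rw [totDist_inl_inl] at h
      by_cases hs : s = s'
      · exact congrArg Sum.inl hs
      · rw [if_neg hs] at h; linarith
    · rw [totDist_inl_inr] at h
      have hk0 : (0 : ℝ) ≤ ((l : ℕ) : ℝ) := Nat.cast_nonneg _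
      nlinarith
    · rw [totDist_inr_inl] at h
      have hk0 : (0 : ℝ) ≤ ((k : ℕ) : ℝ) := Nat.cast_nonneg _
      nlinarith
    · by_cases hkl : k = l
      · subst hkl
        rw [totDist_same] at h
        rw [eq_of_dist_eq_zero h]
      · rw [totDist_diff r X Y hkl] at h
        have hkl' : (1 : ℝ) ≤ |((k : ℕ) : ℝ) - ((l : ℕ) : ℝ)| :=
          one_le_abs_natCast fun hh => hkl (Fin.ext hh)
        nlinarith
noncomputable def totMetric (hr : 0 < r) (hdX : ∀ k, diam (univ : Set (X k)) ≤ r)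
    (hdY : ∀ k, diam (univ : Set (Y k)) ≤ r) : MetricSpace (TotSp X Y) where
  dist := totDist r X Y
  dist_self := totDist_self X Y
  dist_comm := totDist_comm X Y
  dist_triangle := totDist_triangle X Y hr hdX hdY
  eq_of_dist_eq_zero := totDist_eq_zero X Y hr _ _

end Tot
section Emb
variable {n : ℕ} (r : ℝ) (X Y : Fin n → Type u)
  [∀ k, MetricSpace (X k)] [∀ k, CompactSpace (X k)] [∀ k, Nonempty (X k)]
  [∀ k, MetricSpace (Y k)] [∀ k, CompactSpace (Y k)] [∀ k, Nonempty (Y k)]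
  {Z : Type*} [MetricSpace Z] (p : Bool → Z) (P : Fin n → Set Z)
  {G : Fin n → Type*} [∀ k, MetricSpace (G k)]

open Classical in
noncomputable def emb (e : ∀ k, G k ≃ᵢ (P k : Set Z))
    (j : ∀ k, G k → OptimalGHCoupling (X k) (Y k))
    (hex : ∀ z : Z, z ≠ p true → z ≠ p false → ∃ k, z ∈ P k) : Z → TotSp X Y := fun z =>
  if h : z = p true then Sum.inl true
  else if h' : z = p false then Sum.inl false
  else Sum.inr ⟨(hex z h h').choose, j _ ((e _).symm ⟨z, (hex z h h').choose_spec⟩)⟩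

variable {p P}

lemma emb_p (e : ∀ k, G k ≃ᵢ (P k : Set Z)) (j : ∀ k, G k → OptimalGHCoupling (X k) (Y k))
    (hex : ∀ z : Z, z ≠ p true → z ≠ p false → ∃ k, z ∈ P k)
    (hpq : p true ≠ p false) (s : Bool) : emb X Y p P e j hex (p s) = Sum.inl s := by
  cases s
  · simp [emb, Ne.symm hpq]; exact rfl
  · simp [emb]; exact rfl

lemma emb_mem (e : ∀ k, G k ≃ᵢ (P k : Set Z)) (j : ∀ k, G k → OptimalGHCoupling (X k) (Y k))
    (hex : ∀ z : Z, z ≠ p true → z ≠ p false → ∃ k, z ∈ P k)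
    (hdisj : Pairwise fun k l : Fin n => Disjoint (P k) (P l))
    (hp : ∀ (k : Fin n) (s : Bool), p s ∉ P k)
    (k : Fin n) (z : Z) (hz : z ∈ P k) :
    emb X Y p P e j hex z = Sum.inr ⟨k, j k ((e k).symm ⟨z, hz⟩)⟩ := by
  have h1 : z ≠ p true := fun h => hp k true (h ▸ hz)
  have h2 : z ≠ p false := fun h => hp k false (h ▸ hz)
  simp only [emb]
  simp only [h1, h2, ↓reduceDIte]
  have key : ∀ (k₀ : Fin n) (hz₀ : z ∈ P k₀),
      (⟨k₀, j k₀ ((e k₀).symm ⟨z, hz₀⟩)⟩ : Σ k, OptimalGHCoupling (X k) (Y k)) =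
        ⟨k, j k ((e k).symm ⟨z, hz⟩)⟩ := by
    intro k₀ hz₀
    have hk : k₀ = k := by
      by_contra hne
      exact absurd hz (Set.disjoint_left.mp (hdisj hne) hz₀)
    subst hk; rfl
  exact congrArg Sum.inr (key _ _)

lemma emb_dist (hr : 0 < r)
    (e : ∀ k, G k ≃ᵢ (P k : Set Z)) (j : ∀ k, G k → OptimalGHCoupling (X k) (Y k))
    (hj : ∀ k, Isometry (j k))
    (hex : ∀ z : Z, z ≠ p true → z ≠ p false → ∃ k, z ∈ P k)
    (hclass : ∀ z : Z, (∃ s, z = p s) ∨ ∃ k, z ∈ P k)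
    (hp3 : dist (p true) (p false) = 3 * r)
    (hdisj : Pairwise fun k l : Fin n => Disjoint (P k) (P l))
    (hp : ∀ (k : Fin n) (s : Bool), p s ∉ P k)
    (hdist : ∀ (k : Fin n) (s : Bool), ∀ z ∈ P k, dist (p s) z = 5 * r * ((k : ℕ) + 1))
    (hcross : ∀ k l : Fin n, k ≠ l → ∀ z ∈ P k, ∀ w ∈ P l,
      dist z w = 5 * r * |((k : ℕ) : ℝ) - ((l : ℕ) : ℝ)|)
    (z z' : Z) :
    totDist r X Y (emb X Y p P e j hex z) (emb X Y p P e j hex z') = dist z z' := by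
  have hpq : p true ≠ p false := by
    intro h
    rw [h, dist_self] at hp3
    linarith
  rcases hclass z with ⟨s, rfl⟩ | ⟨k, hz⟩
  · rcases hclass z' with ⟨s', rfl⟩ | ⟨l, hz'⟩
    · rw [emb_p X Y e j hex hpq, emb_p X Y e j hex hpq, totDist_inl_inl]
      cases s <;> cases s'
      · simp
      · simp only [if_neg (by decide : ¬(false = true))]
        rw [dist_comm]; exact hp3.symm
      · simp only [if_neg (by decide : ¬(true = false))]
        exact hp3.symm
      · simp
    · rw [emb_p X Y e j hex hpq, emb_mem X Y e j hex hdisj hp l z' hz',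
        totDist_inl_inr]
      exact (hdist l s z' hz').symm
  · rcases hclass z' with ⟨s', rfl⟩ | ⟨l, hz'⟩
    · rw [emb_p X Y e j hex hpq, emb_mem X Y e j hex hdisj hp k z hz,
        totDist_inr_inl]
      rw [dist_comm]
      exact (hdist k s' z hz).symm
    · rw [emb_mem X Y e j hex hdisj hp k z hz, emb_mem X Y e j hex hdisj hp l z' hz']
      by_cases hkl : k = l
      · subst hkl
        rw [totDist_same, (hj k).dist_eq, (e k).symm.dist_eq, Subtype.dist_eq]
      · rw [totDist_diff r X Y hkl]
        exact (hcross k l hkl z hz z' hz').symm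
end Emb

/-- For `r > 0`, `n ≥ 1`, nonempty compact metric spaces
`X k`, `Y k` of diameter at most `r`, a compact `(r,n)`-stacked space `Z` over the
`X k` and a compact `(r,n)`-stacked space `W` over the `Y k`, one has
`d_GH(Z, W) ≤ max_k d_GH(X k, Y k)`. -/
theorem ghDist_stackedSpace_le (r : ℝ) (hr : 0 < r) (n : ℕ) (hn : 1 ≤ n)
    (X Y : Fin n → Type u)
    [∀ k, MetricSpace (X k)] [∀ k, CompactSpace (X k)] [∀ k, Nonempty (X k)]
    [∀ k, MetricSpace (Y k)] [∀ k, CompactSpace (Y k)] [∀ k, Nonempty (Y k)]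
    (hdX : ∀ k, Metric.diam (Set.univ : Set (X k)) ≤ r)
    (hdY : ∀ k, Metric.diam (Set.univ : Set (Y k)) ≤ r)
    (Z : Type v) [MetricSpace Z] [CompactSpace Z] [Nonempty Z]
    (W : Type w) [MetricSpace W] [CompactSpace W] [Nonempty W]
    (p : Bool → Z) (P : Fin n → Set Z) (hZ : IsStackedSpace r X Z p P)
    (q : Bool → W) (Q : Fin n → Set W) (hW : IsStackedSpace r Y W q Q) :
    ghDist Z W ≤ ⨆ k : Fin n, ghDist (X k) (Y k) := by
  obtain ⟨hp3, hPd, hPp, hPcov, hPiso, hPdist, hPcross⟩ := hZ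
  obtain ⟨hq3, hQd, hQp, hQcov, hQiso, hQdist, hQcross⟩ := hW
  set S := ⨆ k : Fin n, ghDist (X k) (Y k) with hS_def
  have hS : 0 ≤ S := by
    refine Real.iSup_nonneg fun k => ?_
    rw [← hausdorffDist_optimal (X := X k) (Y := Y k)]
    exact hausdorffDist_nonneg
  have hghS : ∀ k, ghDist (X k) (Y k) ≤ S := by
    intro k
    rw [hS_def]
    exact le_ciSup (f := fun k : Fin n => ghDist (X k) (Y k))
      (Set.Finite.bddAbove (Set.finite_range _)) k
  -- classification of points of Z and W
  have classZ : ∀ z : Z, (∃ s, z = p s) ∨ ∃ k, z ∈ P k := by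
    intro z
    have hz : z ∈ ({p true, p false} ∪ ⋃ k, P k : Set Z) := hPcov ▸ Set.mem_univ z
    rcases hz with h | h
    · rcases h with h | h
      · exact Or.inl ⟨true, h⟩
      · exact Or.inl ⟨false, h⟩
    · exact Or.inr (Set.mem_iUnion.1 h)
  have classW : ∀ w : W, (∃ s, w = q s) ∨ ∃ k, w ∈ Q k := by
    intro w
    have hw : w ∈ ({q true, q false} ∪ ⋃ k, Q k : Set W) := hQcov ▸ Set.mem_univ w
    rcases hw with h | h
    · rcases h with h | h
      · exact Or.inl ⟨true, h⟩
      · exact Or.inl ⟨false, h⟩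
    · exact Or.inr (Set.mem_iUnion.1 h)
  have hexZ : ∀ z : Z, z ≠ p true → z ≠ p false → ∃ k, z ∈ P k := by
    intro z h1 h2
    rcases classZ z with ⟨s, rfl⟩ | h
    · cases s
      · exact absurd rfl h2
      · exact absurd rfl h1
    · exact h
  have hexW : ∀ w : W, w ≠ q true → w ≠ q false → ∃ k, w ∈ Q k := by
    intro w h1 h2
    rcases classW w with ⟨s, rfl⟩ | h
    · cases s
      · exact absurd rfl h2
      · exact absurd rfl h1
    · exact h
  have hpq : p true ≠ p false := by
    intro h
    rw [h, dist_self] at hp3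
    linarith
  have hqq : q true ≠ q false := by
    intro h
    rw [h, dist_self] at hq3
    linarith
  let eZ : ∀ k, X k ≃ᵢ (P k : Set Z) := fun k => (hPiso k).some
  let eW : ∀ k, Y k ≃ᵢ (Q k : Set W) := fun k => (hQiso k).some
  letI : MetricSpace (TotSp X Y) := totMetric X Y hr hdX hdY
  set ΦZ : Z → TotSp X Y := emb X Y p P eZ (fun k => optimalGHInjl (X k) (Y k)) hexZ with hΦZ
  set ΦW : W → TotSp X Y := emb X Y q Q eW (fun k => optimalGHInjr (X k) (Y k)) hexW with hΦW
  have isoZ : Isometry ΦZ :=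
    Isometry.of_dist_eq fun z z' =>
      emb_dist r X Y hr eZ _ (fun k => isometry_optimalGHInjl (X k) (Y k)) hexZ classZ hp3 hPd
        hPp hPdist hPcross z z'
  have isoW : Isometry ΦW :=
    Isometry.of_dist_eq fun w w' =>
      emb_dist r X Y hr eW _ (fun k => isometry_optimalGHInjr (X k) (Y k)) hexW classW hq3 hQd
        hQp hQdist hQcross w w'
  refine le_trans (ghDist_le_hausdorffDist isoZ isoW) ?_
  apply hausdorffDist_le_of_mem_dist hS
  · rintro _ ⟨z, rfl⟩
    rcases classZ z with ⟨s, rfl⟩ | ⟨k, hz⟩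
    · refine ⟨ΦW (q s), mem_range_self _, ?_⟩
      have h1 : ΦZ (p s) = Sum.inl s := emb_p X Y eZ _ hexZ hpq s
      have h2 : ΦW (q s) = Sum.inl s := emb_p X Y eW _ hexW hqq s
      rw [h1, h2]; refine (dist_self (show TotSp X Y from Sum.inl s)).le.trans ?_
      exact hS
    · set a := (eZ k).symm ⟨z, hz⟩ with ha
      obtain ⟨b, hb⟩ := exists_close_injr (A := X k) (B := Y k) a
      set w : W := ((eW k b : (Q k : Set W)) : W) with hw
      have hmem : w ∈ Q k := (eW k b).2
      refine ⟨ΦW w, mem_range_self _, ?_⟩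
      have h1 : ΦZ z = Sum.inr ⟨k, optimalGHInjl (X k) (Y k) a⟩ :=
        emb_mem X Y eZ _ hexZ hPd hPp k z hz
      have h3 : (eW k).symm ⟨w, hmem⟩ = b := by
        have h4 : (⟨w, hmem⟩ : (Q k : Set W)) = eW k b := rfl
        rw [h4, IsometryEquiv.symm_apply_apply]
      have h2 : ΦW w = Sum.inr ⟨k, optimalGHInjr (X k) (Y k) b⟩ := by
        have h6 := emb_mem X Y eW (fun k => optimalGHInjr (X k) (Y k)) hexW hQd hQp k w hmem
        rw [h3] at h6
        exact h6
      have h5 : dist (ΦZ z) (ΦW w)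
          = dist (optimalGHInjl (X k) (Y k) a) (optimalGHInjr (X k) (Y k) b) := by
        rw [h1, h2]
        exact totDist_same r X Y k _ _
      rw [h5]
      exact hb.trans (hghS k)
  · rintro _ ⟨w, rfl⟩
    rcases classW w with ⟨s, rfl⟩ | ⟨k, hw⟩
    · refine ⟨ΦZ (p s), mem_range_self _, ?_⟩
      have h1 : ΦZ (p s) = Sum.inl s := emb_p X Y eZ _ hexZ hpq s
      have h2 : ΦW (q s) = Sum.inl s := emb_p X Y eW _ hexW hqq s
      rw [h1, h2]; refine (dist_self (show TotSp X Y from Sum.inl s)).le.trans ?_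
      exact hS
    · set b := (eW k).symm ⟨w, hw⟩ with hb'
      obtain ⟨a, hab⟩ := exists_close_injl (A := X k) (B := Y k) b
      set z : Z := ((eZ k a : (P k : Set Z)) : Z) with hz'
      have hmem : z ∈ P k := (eZ k a).2
      refine ⟨ΦZ z, mem_range_self _, ?_⟩
      have h1 : ΦW w = Sum.inr ⟨k, optimalGHInjr (X k) (Y k) b⟩ :=
        emb_mem X Y eW _ hexW hQd hQp k w hw
      have h3 : (eZ k).symm ⟨z, hmem⟩ = a := by
        have h4 : (⟨z, hmem⟩ : (P k : Set Z)) = eZ k a := rfl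
        rw [h4, IsometryEquiv.symm_apply_apply]
      have h2 : ΦZ z = Sum.inr ⟨k, optimalGHInjl (X k) (Y k) a⟩ := by
        have h6 := emb_mem X Y eZ (fun k => optimalGHInjl (X k) (Y k)) hexZ hPd hPp k z hmem
        rw [h3] at h6
        exact h6
      have h5 : dist (ΦW w) (ΦZ z)
          = dist (optimalGHInjr (X k) (Y k) b) (optimalGHInjl (X k) (Y k) a) := by
        rw [h1, h2]
        exact totDist_same r X Y k _ _
      rw [h5]
      exact hab.trans (hghS k)
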